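/- Let k ≥ 2 and n ≥ binom(k+1, 2). An S-block [α|β] ∈ S-Block(n) belongs to A(n, k, k−1) if and only if [τ_k(n)|τ'_{k−1}(n)] ⪯ [α|β] and [α|β] ⪯ [α'|β'] for some [α'|β'] ∈ (Max)^n_{k,k−1}. Consequently A(n, k, k−1) is an amphora in S-Block(n) with minimum element [τ_k(n)|τ'_{k−1}(n)] and with antichain of maximal elements (Max)^n_{k,k−1}. -/

import Mathlib

/-- A partition: a non-increasing list of positive integers. -/
def IsPartition (π : List ℕ) : Prop :=
  π.Pairwise (· ≥ ·) ∧ ∀ x ∈ π, 0 < x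

/-- A partition of `n` into distinct positive parts, listed in (strictly) decreasing order. -/
def DisPart (n : ℕ) (γ : List ℕ) : Prop :=
  γ.Pairwise (· > ·) ∧ (∀ x ∈ γ, 0 < x) ∧ γ.sum = n

/-- A partition of `n` into exactly `k` distinct positive parts. -/
def DisPartK (n k : ℕ) (γ : List ℕ) : Prop :=
  DisPart n γ ∧ γ.length = k

/-- `β` majorizes `α`. -/
def Majorizes (β α : List ℕ) : Prop :=
  β.sum = α.sum ∧ ∀ k ≤ min α.length β.length, (α.take k).sum ≤ (β.take k).sum

/-- α(π): the parts `d_i − i + 1` for 1-based indices `i` with `d_i ≥ i`. -/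
def alphaOf (π : List ℕ) : List ℕ :=
  (List.range π.length).filterMap
    (fun i => if i + 1 ≤ π.getD i 0 then some (π.getD i 0 - i) else none)

/-- Number of boxes of the Ferrers diagram strictly below the diagonal in (1-based) column `j`. -/
def betaColCount (π : List ℕ) (j : ℕ) : ℕ :=
  ((List.range π.length).filter (fun i => decide (j ≤ i ∧ j ≤ π.getD i 0))).length

/-- β(π): the positive column counts below the main diagonal, in decreasing order. -/
def betaOf (π : List ℕ) : List ℕ :=
  ((List.range π.length).map (fun j => betaColCount π (j + 1))).filter (fun c => c != 0)

/-- The mark (modified Durfee number) `m(π) = max {i : d_i ≥ i − 1}` (1-based indices). -/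
noncomputable def mark (π : List ℕ) : ℕ :=
  sSup {i : ℕ | 1 ≤ i ∧ i ≤ π.length ∧ i ≤ π.getD (i - 1) 0 + 1}

def IsIndepSet {V : Type*} (G : SimpleGraph V) (s : Set V) : Prop :=
  s.Pairwise (fun v w => ¬ G.Adj v w)

/-- `(K, S)` is a KS-partition of `G`. -/
def IsKS {V : Type*} [Fintype V] (G : SimpleGraph V) (K S : Finset V) : Prop :=
  (∀ v, v ∈ K ∨ v ∈ S) ∧ Disjoint K S ∧ G.IsClique (K : Set V) ∧ IsIndepSet G (S : Set V)

def IsSplit {V : Type*} [Fintype V] (G : SimpleGraph V) : Prop :=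
  ∃ K S, IsKS G K S

noncomputable def cliqueNum {V : Type*} [Fintype V] (G : SimpleGraph V) : ℕ :=
  sSup {n | ∃ s : Finset V, G.IsNClique n s}

noncomputable def indepNum {V : Type*} [Fintype V] (G : SimpleGraph V) : ℕ :=
  sSup {n | ∃ s : Finset V, IsIndepSet G (s : Set V) ∧ s.card = n}

/-- A balanced split graph: some KS-partition is simultaneously K-max and S-max. -/
def IsBalancedSplit {V : Type*} [Fintype V] (G : SimpleGraph V) : Prop :=
  IsSplit G ∧ ∃ K S, IsKS G K S ∧ K.card = cliqueNum G ∧ S.card = indepNum G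

/-- An unbalanced split graph. -/
def IsUnbalancedSplit {V : Type*} [Fintype V] (G : SimpleGraph V) : Prop :=
  IsSplit G ∧ ¬ ∃ K S, IsKS G K S ∧ K.card = cliqueNum G ∧ S.card = indepNum G

/-- `π` is the degree sequence of `G` (degrees in non-increasing order). -/
def HasDegSeq {V : Type*} [Fintype V] (G : SimpleGraph V) [DecidableRel G.Adj]
    (π : List ℕ) : Prop :=
  π.Pairwise (· ≥ ·) ∧ (π : Multiset ℕ) = Finset.univ.val.map (fun v => G.degree v)

def NoIsolated {V : Type*} [Fintype V] (G : SimpleGraph V) [DecidableRel G.Adj] : Prop :=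
  ∀ v, 0 < G.degree v

def IsThreshold {V : Type*} [Fintype V] (G : SimpleGraph V) : Prop :=
  ∃ (t : ℝ) (a : V → ℝ), 0 < t ∧ (∀ v, 0 < a v) ∧
    ∀ s : Finset V, (IsIndepSet G (s : Set V) ↔ ∑ v ∈ s, a v ≤ t)

noncomputable def chromNum {V : Type*} [Fintype V] (G : SimpleGraph V) : ℕ :=
  sInf {n | G.Colorable n}

def IsNG {V : Type*} [Fintype V] (G : SimpleGraph V) : Prop :=
  chromNum G + chromNum Gᶜ = Fintype.card V + 1

def ngA {V : Type*} [Fintype V] (G : SimpleGraph V) [DecidableRel G.Adj] : Set V :=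
  {v | G.degree v = chromNum G - 1}

def IsNG1 {V : Type*} [Fintype V] (G : SimpleGraph V) [DecidableRel G.Adj] : Prop :=
  IsNG G ∧ G.IsClique (ngA G)

def IsNG2 {V : Type*} [Fintype V] (G : SimpleGraph V) [DecidableRel G.Adj] : Prop :=
  IsNG G ∧ IsIndepSet G (ngA G)

def IsNG3 {V : Type*} [Fintype V] (G : SimpleGraph V) [DecidableRel G.Adj] : Prop :=
  IsNG G ∧ Nonempty ((G.induce (ngA G)) ≃g SimpleGraph.cycleGraph 5)

/-- `[α|β]` is an S-block for the integer `n`. -/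
def IsSBlock (n : ℕ) (α β : List ℕ) : Prop :=
  DisPart n α ∧ DisPart n β ∧ Majorizes β α ∧
    (α.length = β.length ∨ α.length = β.length + 1)

/-- `[α₁|β₁] ⪰ [α₂|β₂]` in the block order. -/
def BlockMaj (α₁ β₁ α₂ β₂ : List ℕ) : Prop :=
  Majorizes α₁ α₂ ∧ Majorizes β₂ β₁

/-- τ'_k(n) = (n − C(k,2), k−1, k−2, …, 2, 1). -/
def tauMax (n k : ℕ) : List ℕ :=
  (n - Nat.choose k 2) :: ((List.range (k - 1)).reverse.map (· + 1))

/-- τ_k(n): parts (k−i+1)+q+1 for 1 ≤ i ≤ r and (k−i+1)+q for r < i ≤ k,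
where n − C(k+1,2) = qk + r, 0 ≤ r < k. -/
def tauMin (n k : ℕ) : List ℕ :=
  (List.range k).map
    (fun i => (k - i) + (n - Nat.choose (k + 1) 2) / k +
      (if i < (n - Nat.choose (k + 1) 2) % k then 1 else 0))

/-- `β` covers `α` in `Dis(n)`. -/
def CoversDis (n : ℕ) (β α : List ℕ) : Prop :=
  DisPart n α ∧ DisPart n β ∧ Majorizes β α ∧ β ≠ α ∧
    ¬ ∃ γ, DisPart n γ ∧ Majorizes β γ ∧ Majorizes γ α ∧ γ ≠ α ∧ γ ≠ β

/-- `[α₁|β₁]` covers `[α₂|β₂]` in `S-Block(n)`. -/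
def BlockCovers (n : ℕ) (α₁ β₁ α₂ β₂ : List ℕ) : Prop :=
  IsSBlock n α₁ β₁ ∧ IsSBlock n α₂ β₂ ∧ BlockMaj α₁ β₁ α₂ β₂ ∧ ¬(α₁ = α₂ ∧ β₁ = β₂) ∧
    ¬ ∃ α β, IsSBlock n α β ∧ BlockMaj α₁ β₁ α β ∧ BlockMaj α β α₂ β₂ ∧
      ¬(α = α₁ ∧ β = β₁) ∧ ¬(α = α₂ ∧ β = β₂)

/-- `[α|β]` is a threshold-covered block: member of TC(n). -/
def InTC (n : ℕ) (α β : List ℕ) : Prop :=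
  IsSBlock n α β ∧ CoversDis n β α

def IsLubDis (n : ℕ) (a b c : List ℕ) : Prop :=
  Majorizes c a ∧ Majorizes c b ∧
    ∀ d, DisPart n d → Majorizes d a → Majorizes d b → Majorizes d c

def IsGlbDis (n : ℕ) (a b c : List ℕ) : Prop :=
  Majorizes a c ∧ Majorizes b c ∧
    ∀ d, DisPart n d → Majorizes a d → Majorizes b d → Majorizes c d



lemma maj_refl (a : List ℕ) : Majorizes a a := ⟨rfl, fun _ _ => le_refl _⟩

lemma sum_take_drop (l : List ℕ) (j : ℕ) : (l.take j).sum + (l.drop j).sum = l.sum := by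
  rw [← List.sum_append, List.take_append_drop]

lemma maj_length_le {b a : List ℕ} (h : Majorizes b a) (hb : ∀ x ∈ b, 0 < x) :
    b.length ≤ a.length := by
  by_contra hc
  push_neg at hc
  have h2 := h.2 a.length (by omega)
  rw [List.take_of_length_le (le_refl _)] at h2
  have h3 := sum_take_drop b a.length
  have h4 : b.drop a.length ≠ [] := by
    intro he
    have := congrArg List.length he
    simp at this
    omega
  have h5 : 0 < (b.drop a.length).sum := by
    rcases List.exists_mem_of_ne_nil _ h4 with ⟨x, hx⟩
    have hxb : x ∈ b := List.mem_of_mem_drop hx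
    have := hb x hxb
    calc 0 < x := this
    _ ≤ (b.drop a.length).sum := List.single_le_sum (by simp) _ hx
  have hsum := h.1
  omega

lemma maj_trans {c b a : List ℕ} (h1 : Majorizes c b) (h2 : Majorizes b a)
    (hc : ∀ x ∈ c, 0 < x) : Majorizes c a := by
  have hlen : c.length ≤ b.length := maj_length_le h1 hc
  refine ⟨h1.1.trans h2.1, fun j hj => ?_⟩
  have hj1 : j ≤ min b.length c.length := by omega
  have hj2 : j ≤ min a.length b.length := by omega
  exact (h2.2 j hj2).trans (h1.2 j hj1)

/-- lists with equal lengths and equal prefix sums are equal -/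
lemma eq_of_prefix_sums : ∀ (a b : List ℕ), a.length = b.length →
    (∀ j ≤ a.length, (a.take j).sum = (b.take j).sum) → a = b := by
  intro a
  induction a with
  | nil => intro b hl _; exact (List.length_eq_zero_iff.mp hl.symm).symm
  | cons x t ih =>
    intro b hl hp
    match b with
    | [] => simp at hl
    | y :: s =>
      have h1 := hp 1 (by simp)
      simp at h1
      subst h1
      have hts : t = s := by
        apply ih s (by simpa using hl)
        intro j hj
        have := hp (j + 1) (by simpa using hj)
        simpa using this
      rw [hts]
/-- measure for maximality arguments -/
def Mmeas (γ : List ℕ) : ℕ := ∑ j ∈ Finset.range (γ.length + 1), (γ.take j).sum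

lemma Mmeas_le (n : ℕ) (γ : List ℕ) (h : DisPart n γ) : Mmeas γ ≤ (γ.length + 1) * n := by
  unfold Mmeas
  calc ∑ j ∈ Finset.range (γ.length + 1), (γ.take j).sum
      ≤ ∑ _j ∈ Finset.range (γ.length + 1), n := by
        apply Finset.sum_le_sum
        intro j _
        have := sum_take_drop γ j
        have := h.2.2
        omega
  _ = (γ.length + 1) * n := by simp [Finset.sum_const, Nat.mul_comm]

lemma Mmeas_lt {n : ℕ} {γ δ : List ℕ} (hγ : DisPart n γ) (hδ : DisPart n δ)
    (hlen : γ.length = δ.length) (hmaj : Majorizes δ γ) (hne : δ ≠ γ) :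
    Mmeas γ < Mmeas δ := by
  have hterm : ∀ j ∈ Finset.range (γ.length + 1), (γ.take j).sum ≤ (δ.take j).sum := by
    intro j hj
    simp only [Finset.mem_range] at hj
    exact hmaj.2 j (by omega)
  have hex : ∃ j ∈ Finset.range (γ.length + 1), (γ.take j).sum < (δ.take j).sum := by
    by_contra hc
    push_neg at hc
    apply hne
    apply eq_of_prefix_sums δ γ hlen.symm
    intro j hj
    have h1 := hterm j (by simp; omega)
    have h2 := hc j (by simp; omega)
    omega
  have := Finset.sum_lt_sum hterm hex
  unfold Mmeas
  rw [← hlen]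
  exact this

lemma exists_maximal (n ℓ : ℕ) (p : List ℕ → Prop)
    (hp : ∀ γ, p γ → DisPart n γ ∧ γ.length = ℓ) :
    ∀ γ0, p γ0 → ∃ γm, p γm ∧ Majorizes γm γ0 ∧
      ∀ δ, p δ → Majorizes δ γm → δ = γm := by
  have key : ∀ t : ℕ, ∀ γ0, p γ0 → (ℓ + 1) * n ≤ Mmeas γ0 + t →
      ∃ γm, p γm ∧ Majorizes γm γ0 ∧ ∀ δ, p δ → Majorizes δ γm → δ = γm := by
    intro t
    induction t with
    | zero =>
      intro γ0 h0 hb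
      refine ⟨γ0, h0, maj_refl _, fun δ hδ hmaj => ?_⟩
      by_contra hne
      have h1 := Mmeas_lt (hp γ0 h0).1 (hp δ hδ).1 ((hp γ0 h0).2.trans (hp δ hδ).2.symm) hmaj hne
      have h2 := Mmeas_le n δ (hp δ hδ).1
      rw [(hp δ hδ).2] at h2
      omega
    | succ t ih =>
      intro γ0 h0 hb
      by_cases hmax : ∃ δ, p δ ∧ Majorizes δ γ0 ∧ δ ≠ γ0
      · obtain ⟨δ, hδ, hmaj, hne⟩ := hmax
        have h1 := Mmeas_lt (hp γ0 h0).1 (hp δ hδ).1 ((hp γ0 h0).2.trans (hp δ hδ).2.symm) hmaj hne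
        obtain ⟨γm, h2, h3, h4⟩ := ih δ hδ (by omega)
        exact ⟨γm, h2, maj_trans h3 hmaj (hp γm h2).1.2.1, h4⟩
      · push_neg at hmax
        exact ⟨γ0, h0, maj_refl _, fun δ hδ hmaj => hmax δ hδ hmaj⟩
  intro γ0 h0
  exact key ((ℓ + 1) * n) γ0 h0 (by omega)

lemma exists_minimal (n ℓ : ℕ) (p : List ℕ → Prop)
    (hp : ∀ γ, p γ → DisPart n γ ∧ γ.length = ℓ) :
    ∀ γ0, p γ0 → ∃ γm, p γm ∧ Majorizes γ0 γm ∧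
      ∀ δ, p δ → Majorizes γm δ → δ = γm := by
  have key : ∀ t : ℕ, ∀ γ0, p γ0 → Mmeas γ0 ≤ t →
      ∃ γm, p γm ∧ Majorizes γ0 γm ∧ ∀ δ, p δ → Majorizes γm δ → δ = γm := by
    intro t
    induction t with
    | zero =>
      intro γ0 h0 hb
      refine ⟨γ0, h0, maj_refl _, fun δ hδ hmaj => ?_⟩
      by_contra hne
      have h1 := Mmeas_lt (hp δ hδ).1 (hp γ0 h0).1 ((hp δ hδ).2.trans (hp γ0 h0).2.symm) hmaj
        (fun he => hne (by rw [he]))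
      omega
    | succ t ih =>
      intro γ0 h0 hb
      by_cases hmin : ∃ δ, p δ ∧ Majorizes γ0 δ ∧ δ ≠ γ0
      · obtain ⟨δ, hδ, hmaj, hne⟩ := hmin
        have h1 := Mmeas_lt (hp δ hδ).1 (hp γ0 h0).1 ((hp δ hδ).2.trans (hp γ0 h0).2.symm) hmaj
          (fun he => hne (by rw [← he]))
        obtain ⟨γm, h2, h3, h4⟩ := ih δ hδ (by omega)
        exact ⟨γm, h2, maj_trans hmaj h3 (hp γ0 h0).1.2.1, h4⟩
      · push_neg at hmin
        exact ⟨γ0, h0, maj_refl _, fun δ hδ hmaj => hmin δ hδ hmaj⟩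
  intro γ0 h0
  exact key (Mmeas γ0) γ0 h0 (le_refl _)

/-- head ≥ last + (len - 1) for strictly decreasing lists -/
lemma sdec_last_head : ∀ (l : List ℕ), l.Pairwise (· > ·) → ∀ a b : ℕ,
    l.getLast? = some a → l.head? = some b → a + l.length ≤ b + 1 := by
  intro l
  induction l with
  | nil => simp
  | cons x t ih =>
    intro hs a b hla hhb
    match t with
    | [] => simp_all
    | y :: t' =>
      have hs' : (y :: t').Pairwise (· > ·) := (List.pairwise_cons.mp hs).2
      have hxy : y < x := (List.pairwise_cons.mp hs).1 y (by simp)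
      rw [List.getLast?_cons_cons] at hla
      have := ih hs' a y hla rfl
      simp only [List.head?_cons, Option.some.injEq] at hhb
      simp only [List.length_cons] at this ⊢
      omega

/-- 2*sum + len ≥ 2*len*last + len^2 for strictly decreasing lists -/
lemma sdec_sum_lower : ∀ (l : List ℕ), l.Pairwise (· > ·) → ∀ a : ℕ,
    l.getLast? = some a → 2 * l.length * a + l.length * l.length ≤ 2 * l.sum + l.length := by
  intro l
  induction l with
  | nil => simp
  | cons x t ih =>
    intro hs a hla
    match t with
    | [] =>
      simp only [List.getLast?_singleton, Option.some.injEq] at hla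
      subst hla; simp
    | y :: t' =>
      have hs' : (y :: t').Pairwise (· > ·) := (List.pairwise_cons.mp hs).2
      have hxy : y < x := (List.pairwise_cons.mp hs).1 y (by simp)
      rw [List.getLast?_cons_cons] at hla
      have hlh := sdec_last_head (y :: t') hs' a y hla rfl
      have IH := ih hs' a hla
      simp only [List.length_cons, List.sum_cons] at IH hlh ⊢
      set L := t'.length with hL
      have hx : a + (L + 1) ≤ x := by omega
      nlinarith [IH, hx]

/-- 2*sum + len^2 ≤ 2*len*head + len for strictly decreasing lists -/
lemma sdec_sum_upper : ∀ (l : List ℕ), l.Pairwise (· > ·) → ∀ b : ℕ,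
    l.head? = some b → 2 * l.sum + l.length * l.length ≤ 2 * l.length * b + l.length := by
  intro l
  induction l with
  | nil => simp
  | cons x t ih =>
    intro hs b hhb
    simp only [List.head?_cons, Option.some.injEq] at hhb
    subst hhb
    match t with
    | [] => simp
    | y :: t' =>
      have hs' : (y :: t').Pairwise (· > ·) := (List.pairwise_cons.mp hs).2
      have hxy : y < x := (List.pairwise_cons.mp hs).1 y (by simp)
      have IH := ih hs' y rfl
      simp only [List.length_cons, List.sum_cons] at IH ⊢
      set L := t'.length with hL
      have hmul : (L + 1) * (y + 1) ≤ (L + 1) * x := Nat.mul_le_mul_left _ hxy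
      nlinarith [IH, hmul]

/-- positive strictly decreasing list has sum ≥ triangular number -/
lemma sdec_sum_tri (l : List ℕ) (hs : l.Pairwise (· > ·)) (hp : ∀ x ∈ l, 0 < x) :
    l.length * l.length + l.length ≤ 2 * l.sum := by
  rcases l with _ | ⟨x, t⟩
  · simp
  · have h : (x :: t) ≠ [] := by simp
    have hla : (x :: t).getLast? = some ((x :: t).getLast h) := List.getLast?_eq_getLast h
    have h1 := sdec_sum_lower (x :: t) hs _ hla
    have h2 : 0 < (x :: t).getLast h := hp _ (List.getLast_mem h)
    set la := (x :: t).getLast h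
    set L := (x :: t).length
    have : 2 * L * 1 ≤ 2 * L * la := Nat.mul_le_mul_left _ h2
    simp only [Nat.mul_one] at this
    linarith

lemma two_choose_two (K : ℕ) : 2 * Nat.choose K 2 + K = K * K := by
  induction K with
  | zero => rfl
  | succ m ih =>
    rw [Nat.choose_succ_succ, Nat.choose_one_right]
    have hx : (m + 1) * (m + 1) = m * m + 2 * m + 1 := by ring
    linarith

lemma list_range_sum (m : ℕ) : 2 * (List.range m).sum + m = m * m := by
  induction m with
  | zero => rfl
  | succ m ih =>
    rw [List.range_succ, List.sum_append]
    have hx : (m + 1) * (m + 1) = m * m + 2 * m + 1 := by ring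
    simp only [List.sum_cons, List.sum_nil]
    linarith

lemma sum_map_add_one (l : List ℕ) : (l.map (· + 1)).sum = l.sum + l.length := by
  induction l with
  | nil => rfl
  | cons x t ih => simp [ih]; ring

lemma tauMax_length (n K : ℕ) (hK : 1 ≤ K) : (tauMax n K).length = K := by
  simp [tauMax]; omega

lemma tauMax_T_sum (K : ℕ) :
    ((List.range (K - 1)).reverse.map (· + 1)).sum = Nat.choose K 2 := by
  rcases Nat.eq_zero_or_pos K with h | h
  · subst h; rfl
  · set m := K - 1 with hm
    have hK : K = m + 1 := by omega
    have h1 := list_range_sum m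
    have h2 := two_choose_two K
    have h3 : ((List.range m).reverse.map (· + 1)).sum = (List.range m).sum + m := by
      rw [List.map_reverse, List.sum_reverse, sum_map_add_one]
      simp
    rw [h3]
    have hx : K * K = m * m + 2 * m + 1 := by rw [hK]; ring
    linarith

lemma tauMax_sum (n K : ℕ) (hC : Nat.choose K 2 ≤ n) : (tauMax n K).sum = n := by
  simp only [tauMax, List.sum_cons, tauMax_T_sum]
  omega

lemma choose_succ_two (K : ℕ) : Nat.choose (K + 1) 2 = Nat.choose K 2 + K := by
  have h := Nat.choose_succ_succ K 1
  have h2 := Nat.choose_one_right K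
  norm_num at h
  omega

lemma tauMax_T_getElem (K i : ℕ) (h : i < K - 1) :
    ((List.range (K - 1)).reverse.map (· + 1))[i]'(by simpa using h) = K - 1 - i := by
  simp only [List.getElem_map, List.getElem_reverse, List.getElem_range, List.length_reverse,
    List.length_range]
  omega

lemma tauMax_getElem (n K j : ℕ) (h1 : 1 ≤ j) (h2 : j < K) :
    (tauMax n K)[j]'(by rw [tauMax_length n K (by omega)]; exact h2) = K - j := by
  rcases j with _ | i
  · omega
  · show ((List.range (K - 1)).reverse.map (· + 1))[i]'_ = _
    rw [tauMax_T_getElem K i (by omega)]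
    omega

lemma tauMax_pos (n K : ℕ) (hK : 1 ≤ K) (hn : Nat.choose (K + 1) 2 ≤ n) :
    ∀ x ∈ tauMax n K, 0 < x := by
  intro x hx
  rw [choose_succ_two] at hn
  rcases List.mem_cons.mp hx with h | h
  · subst h; omega
  · simp only [List.mem_map, List.mem_reverse, List.mem_range] at h
    obtain ⟨i, _, rfl⟩ := h
    omega

lemma tauMax_sorted (n K : ℕ) (hK : 1 ≤ K) (hn : Nat.choose (K + 1) 2 ≤ n) :
    (tauMax n K).Pairwise (· > ·) := by
  rw [choose_succ_two] at hn
  rw [List.pairwise_iff_getElem]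
  intro i j hi hj hij
  rw [tauMax_length n K hK] at hi hj
  rcases Nat.eq_zero_or_pos i with h0 | h0
  · subst h0
    show _ > _
    have e1 : (tauMax n K)[0]'(by rw [tauMax_length n K hK]; omega) = n - Nat.choose K 2 := rfl
    rw [e1, tauMax_getElem n K j (by omega) hj]
    omega
  · show _ > _
    rw [tauMax_getElem n K i h0 hi, tauMax_getElem n K j (by omega) hj]
    omega

lemma head?_drop' (l : List ℕ) (j : ℕ) (h : j < l.length) :
    (l.drop j).head? = some (l[j]'h) := by
  have hne : l.drop j ≠ [] := by
    intro he
    have := congrArg List.length he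
    simp at this; omega
  rw [List.head?_eq_head hne, List.head_eq_getElem]
  simp

lemma tauMax_maj (n K : ℕ) (hK : 1 ≤ K) (hn : Nat.choose (K + 1) 2 ≤ n)
    (β : List ℕ) (hβ : DisPart n β) (hlen : β.length = K) :
    Majorizes (tauMax n K) β := by
  have hC : Nat.choose K 2 ≤ n := by rw [choose_succ_two] at hn; omega
  have hτlen := tauMax_length n K hK
  have hτsum := tauMax_sum n K hC
  constructor
  · rw [hτsum, hβ.2.2]
  · intro j hj
    rw [hlen, hτlen, Nat.min_self] at hj
    rcases Nat.eq_zero_or_pos j with h0 | h0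
    · subst h0; simp
    rcases Nat.lt_or_ge j K with hjK | hjK
    · -- main case 1 ≤ j < K
      set L := K - j with hL
      have hLpos : 1 ≤ L := by omega
      -- β side
      have hdβlen : (β.drop j).length = L := by simp [hlen]; omega
      have hdβsorted : (β.drop j).Pairwise (· > ·) :=
        hβ.1.sublist (List.drop_sublist j β)
      have hdβpos : ∀ x ∈ β.drop j, 0 < x := fun x hx => hβ.2.1 x (List.mem_of_mem_drop hx)
      have htri := sdec_sum_tri (β.drop j) hdβsorted hdβpos
      rw [hdβlen] at htri
      -- τ side
      have hdτlen : ((tauMax n K).drop j).length = L := by simp [hτlen]; omega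
      have hdτsorted : ((tauMax n K).drop j).Pairwise (· > ·) :=
        (tauMax_sorted n K hK hn).sublist (List.drop_sublist j (tauMax n K))
      have hhead : ((tauMax n K).drop j).head? = some ((tauMax n K)[j]'(by omega)) :=
        head?_drop' _ j (by omega)
      rw [tauMax_getElem n K j h0 hjK] at hhead
      have hupper := sdec_sum_upper ((tauMax n K).drop j) hdτsorted (K - j) hhead
      rw [hdτlen, ← hL] at hupper
      -- combine
      have e1 := sum_take_drop β j
      have e2 := sum_take_drop (tauMax n K) j
      rw [hβ.2.2] at e1
      rw [hτsum] at e2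
      linarith
    · -- j = K
      have hjK' : j = K := by omega
      have e1 : β.take j = β := List.take_of_length_le (by omega)
      have e2 : (tauMax n K).take j = tauMax n K := List.take_of_length_le (by omega)
      rw [e1, e2, hτsum, hβ.2.2]

lemma getLast?_take' (l : List ℕ) (j : ℕ) (h1 : 1 ≤ j) (h2 : j ≤ l.length) :
    (l.take j).getLast? = some (l[j-1]'(by omega)) := by
  have hne : l.take j ≠ [] := by
    intro he
    have := congrArg List.length he
    simp only [List.length_take, List.length_nil] at this; omega
  rw [List.getLast?_eq_getLast hne, List.getLast_eq_getElem]
  rw [List.getElem_take]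
  congr 1
  apply getElem_congr rfl
  rw [List.length_take]
  omega

/-- exact doubled prefix sums of the tauMin-style list -/
lemma TBeq (k q r : ℕ) : ∀ j ≤ k,
    2 * ((List.range j).map (fun i => (k - i) + q + if i < r then 1 else 0)).sum + j * j
      = 2 * (j * k) + 2 * (j * q) + 2 * min j r + j := by
  intro j
  induction j with
  | zero => intro _; simp
  | succ j ih =>
    intro hj
    have ihj := ih (by omega)
    rw [List.range_succ, List.map_append, List.sum_append]
    simp only [List.map_cons, List.map_nil, List.sum_cons, List.sum_nil]
    set S := ((List.range j).map (fun i => (k - i) + q + if i < r then 1 else 0)).sum with hS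
    have hd : k - j + j = k := by omega
    set d := k - j with hdd
    have e1 : (j+1) * k = j * k + k := by ring
    have e2 : (j+1) * q = j * q + q := by ring
    have e3 : (j+1) * (j+1) = j * j + 2 * j + 1 := by ring
    rcases Nat.lt_or_ge j r with hlt | hge
    · have hm1 : min j r = j := by omega
      have hm2 : min (j+1) r = j + 1 := by omega
      rw [if_pos hlt, hm2, e1, e2]
      rw [hm1] at ihj
      linarith
    · have hm1 : min j r = r := by omega
      have hm2 : min (j+1) r = r := by omega
      rw [if_neg (by omega), hm2, e1, e2]
      rw [hm1] at ihj
      linarith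

/-- lower bound for doubled prefix sums of a distinct partition with k parts -/
lemma alpha_bound (n k q r : ℕ) (h2n : 2 * n = k * k + k + 2 * (k * q) + 2 * r)
    (α : List ℕ) (hα : DisPart n α) (hlen : α.length = k)
    (j : ℕ) (hj1 : 1 ≤ j) (hjk : j ≤ k) :
    2 * (j * k) + 2 * (j * q) + 2 * min j r + j ≤ 2 * (α.take j).sum + j * j := by
  have hmr : min j r ≤ r := Nat.min_le_right _ _
  have hmj : min j r ≤ j := Nat.min_le_left _ _
  rcases Nat.lt_or_ge j k with hjlt | hjge
  · -- j < k
    set s := k - j with hs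
    have hks : k = j + s := by omega
    have hs1 : 1 ≤ s := by omega
    have hja : j - 1 < α.length := by omega
    have hjb : j < α.length := by omega
    set a := α[j-1]'hja with ha
    set b := α[j]'hjb with hb
    have hba : b + 1 ≤ a := by
      have := List.pairwise_iff_getElem.mp hα.1 (j-1) j hja hjb (by omega)
      omega
    -- prefix bound
    have htksorted : (α.take j).Pairwise (· > ·) := hα.1.sublist (List.take_sublist j α)
    have htklen : (α.take j).length = j := by simp [List.length_take]; omega
    have hlast := getLast?_take' α j hj1 (by omega)
    have hlow := sdec_sum_lower (α.take j) htksorted a hlast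
    rw [htklen] at hlow
    -- suffix bound
    have hdrsorted : (α.drop j).Pairwise (· > ·) := hα.1.sublist (List.drop_sublist j α)
    have hdrlen : (α.drop j).length = s := by simp [hlen]; omega
    have hhead := head?_drop' α j hjb
    have hupp := sdec_sum_upper (α.drop j) hdrsorted b hhead
    rw [hdrlen] at hupp
    have hSD := sum_take_drop α j
    rw [hα.2.2] at hSD
    have e3 : k * k = j * j + 2 * (j * s) + s * s := by rw [hks]; ring
    have e4 : k * q = j * q + s * q := by rw [hks]; ring
    have e5 : j * k = j * j + j * s := by rw [hks]; ring
    rcases le_or_gt a (s + q + 1) with hca | hca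
    · have hsb : s * (b + 1) ≤ s * a := Nat.mul_le_mul_left _ hba
      have hsa : s * a ≤ s * (s + q + 1) := Nat.mul_le_mul_left _ hca
      have f1 : s * (b + 1) = s * b + s := by ring
      have f2 : s * (s + q + 1) = s * s + s * q + s := by ring
      linarith
    · have hja2 : j * (s + q + 2) ≤ j * a := Nat.mul_le_mul_left _ hca
      have f3 : j * (s + q + 2) = j * s + j * q + 2 * j := by ring
      linarith
  · -- j = k
    have hjk' : j = k := by omega
    subst hjk'
    have e1 : α.take j = α := List.take_of_length_le (by omega)
    rw [e1, hα.2.2]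
    linarith

lemma tauMin_length (n k : ℕ) : (tauMin n k).length = k := by simp [tauMin]

lemma maj_tauMin (n k : ℕ) (hk : 1 ≤ k) (hn : Nat.choose (k + 1) 2 ≤ n)
    (α : List ℕ) (hα : DisPart n α) (hlen : α.length = k) :
    Majorizes α (tauMin n k) := by
  set m := n - Nat.choose (k + 1) 2 with hm
  set q := m / k with hq
  set r := m % k with hr
  have hrk : r < k := Nat.mod_lt _ (by omega)
  have hqr : k * q + r = m := Nat.div_add_mod m k
  have hCm : Nat.choose (k + 1) 2 + m = n := by omega
  have h2C : 2 * Nat.choose (k + 1) 2 = k * k + k := by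
    have := two_choose_two (k + 1)
    have e : (k+1) * (k+1) = k * k + 2 * k + 1 := by ring
    linarith
  have h2n : 2 * n = k * k + k + 2 * (k * q) + 2 * r := by linarith
  have hτ : tauMin n k = (List.range k).map (fun i => (k - i) + q + if i < r then 1 else 0) := rfl
  have hτtake : ∀ j ≤ k, (tauMin n k).take j
      = (List.range j).map (fun i => (k - i) + q + if i < r then 1 else 0) := by
    intro j hj
    rw [hτ, ← List.map_take, List.take_range, Nat.min_eq_left hj]
  have hτsum : (tauMin n k).sum = n := by
    have h1 := TBeq k q r k (le_refl k)
    have h2 : (tauMin n k).take k = tauMin n k := by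
      rw [List.take_of_length_le]
      rw [tauMin_length]
    rw [← h2, hτtake k (le_refl k)]
    have hminr : min k r = r := by omega
    rw [hminr] at h1
    linarith
  constructor
  · rw [hα.2.2, hτsum]
  · intro j hj
    rw [tauMin_length, hlen, Nat.min_self] at hj
    rcases Nat.eq_zero_or_pos j with h0 | h0
    · subst h0; simp
    have h1 := TBeq k q r j hj
    have h2 := alpha_bound n k q r h2n α hα hlen j h0 hj
    rw [hτtake j hj]
    linarith


/-- For k ≥ 2 and n ≥ C(k+1,2), an S-block [α|β] ∈ S-Block(n) belongs to
A(n,k,k−1) (i.e. α ∈ Dis_k(n), β ∈ Dis_{k−1}(n)) iff [τ_k(n)|τ'_{k−1}(n)] ⪯ [α|β] and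
[α|β] ⪯ [α'|β'] for some [α'|β'] ∈ (Max)ⁿ_{k,k−1}; hence A(n,k,k−1) is an amphora with
minimum element [τ_k(n)|τ'_{k−1}(n)] and maximal antichain (Max)ⁿ_{k,k−1}. -/
theorem stmt15 (n k : ℕ) (hk : 2 ≤ k) (hn : Nat.choose (k + 1) 2 ≤ n)
    (α β : List ℕ) (h : IsSBlock n α β) :
    (DisPartK n k α ∧ DisPartK n (k - 1) β) ↔
      (BlockMaj α β (tauMin n k) (tauMax n (k - 1)) ∧
        ∃ α' β', InTC n α' β' ∧ DisPartK n k α' ∧ DisPartK n (k - 1) β' ∧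
          BlockMaj α' β' α β) := by
  obtain ⟨hαdis, hβdis, hβα, _hlens⟩ := h
  have hK1 : k - 1 + 1 = k := by omega
  have hn' : Nat.choose (k - 1 + 1) 2 ≤ n := by
    rw [hK1]
    exact le_trans (Nat.choose_le_choose 2 (by omega)) hn
  constructor
  · rintro ⟨⟨_, hαk⟩, ⟨_, hβk⟩⟩
    refine ⟨⟨maj_tauMin n k (by omega) hn α hαdis hαk,
      tauMax_maj n (k - 1) (by omega) hn' β hβdis hβk⟩, ?_⟩
    -- existence of a maximal covered block above [α|β]
    obtain ⟨α', ⟨hα'dis, hα'len, hα'α, hβα'⟩, _hα'maj, hα'max⟩ :=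
      exists_maximal n k
        (fun γ => DisPart n γ ∧ γ.length = k ∧ Majorizes γ α ∧ Majorizes β γ)
        (fun γ hγ => ⟨hγ.1, hγ.2.1⟩) α ⟨hαdis, hαk, maj_refl α, hβα⟩
    obtain ⟨β', ⟨hβ'dis, hβ'len, hβ'α', hββ'⟩, _hβ'maj, hβ'min⟩ :=
      exists_minimal n (k - 1)
        (fun γ => DisPart n γ ∧ γ.length = k - 1 ∧ Majorizes γ α' ∧ Majorizes β γ)
        (fun γ hγ => ⟨hγ.1, hγ.2.1⟩) β ⟨hβdis, hβk, hβα', maj_refl β⟩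
    refine ⟨α', β', ⟨⟨hα'dis, hβ'dis, hβ'α', Or.inr (by omega)⟩,
      hα'dis, hβ'dis, hβ'α', ?_, ?_⟩, ⟨hα'dis, hα'len⟩, ⟨hβ'dis, hβ'len⟩, hα'α, hββ'⟩
    · intro he
      have := congrArg List.length he
      rw [hα'len, hβ'len] at this
      omega
    · rintro ⟨γ, hγdis, hβ'γ, hγα', hne1, hne2⟩
      have hlg1 : k - 1 ≤ γ.length := hβ'len ▸ maj_length_le hβ'γ hβ'dis.2.1
      have hlg2 : γ.length ≤ k := hα'len ▸ maj_length_le hγα' hγdis.2.1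
      have hβγ : Majorizes β γ := maj_trans hββ' hβ'γ hβdis.2.1
      by_cases hlg : γ.length = k
      · exact hne1 (hα'max γ ⟨hγdis, hlg, maj_trans hγα' hα'α hγdis.2.1, hβγ⟩ hγα')
      · exact hne2 (hβ'min γ ⟨hγdis, by omega, hγα', hβγ⟩ hβ'γ)
  · rintro ⟨⟨hmaj1, hmaj2⟩, α', β', ⟨_, _⟩, ⟨hα'dis, hα'len⟩, ⟨hβ'dis, hβ'len⟩, hbm1, hbm2⟩
    have l1 : α.length ≤ k := by
      have := maj_length_le hmaj1 hαdis.2.1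
      rwa [tauMin_length] at this
    have l2 : k ≤ α.length := by
      have := maj_length_le hbm1 hα'dis.2.1
      omega
    have l3 : β.length ≤ k - 1 := hβ'len ▸ maj_length_le hbm2 hβdis.2.1
    have l4 : k - 1 ≤ β.length := by
      have := maj_length_le hmaj2 (tauMax_pos n (k - 1) (by omega) hn')
      rwa [tauMax_length n (k - 1) (by omega)] at this
    exact ⟨⟨hαdis, by omega⟩, ⟨hβdis, by omega⟩⟩
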